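/- Let Φ be a Young function and X a quasi-normed function space over μ with quasi-triangle constant K. Then the Luxemburg functional ‖f‖_{X^Φ} := inf{ k > 0 : Φ(|f|/k) ∈ X and ‖Φ(|f|/k)‖_X ≤ 1 } is a quasi-norm on X^Φ with the same quasi-triangle constant K, and X^Φ with this quasi-norm is a quasi-normed function space over μ. If ‖·‖_X is a norm, then ‖·‖_{X^Φ} is a norm. -/

import Mathlib

open MeasureTheory Filter Set

/-- A Young function: strictly increasing, continuous, convex on `[0,∞)`,
vanishing at `0` and tending to infinity. -/
structure IsYoung (Φ : ℝ → ℝ) : Prop where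
  strictMono : StrictMonoOn Φ (Set.Ici 0)
  continuous : ContinuousOn Φ (Set.Ici 0)
  convex : ConvexOn ℝ (Set.Ici 0) Φ
  map_zero : Φ 0 = 0
  tendsto_atTop : Tendsto Φ atTop atTop

/-- A quasi-normed function space over `μ` with quasi-triangle constant `K`:
an ideal of measurable functions (modulo a.e. equality) containing the
constant function `1`, equipped with a lattice quasi-norm. -/
structure QNFS {α : Type*} [MeasurableSpace α] (μ : Measure α) (K : ℝ) where
  mem : (α → ℝ) → Prop
  nrm : (α → ℝ) → ℝ
  one_le_K : 1 ≤ K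
  nrm_nonneg : ∀ f, 0 ≤ nrm f
  nrm_eq_zero : ∀ f, mem f → (nrm f = 0 ↔ f =ᵐ[μ] 0)
  add_mem : ∀ f g, mem f → mem g → mem (f + g)
  smul_mem : ∀ (c : ℝ) (f), mem f → mem (c • f)
  nrm_smul : ∀ (c : ℝ) (f), mem f → nrm (c • f) = |c| * nrm f
  nrm_add_le : ∀ f g, mem f → mem g → nrm (f + g) ≤ K * (nrm f + nrm g)
  ideal_mem : ∀ f g, mem g → (∀ᵐ x ∂μ, |f x| ≤ |g x|) → mem f
  ideal_nrm : ∀ f g, mem f → mem g → (∀ᵐ x ∂μ, |f x| ≤ |g x|) → nrm f ≤ nrm g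
  const_one_mem : mem (fun _ => (1 : ℝ))

variable {α : Type*} [MeasurableSpace α]

/-- Membership in the Orlicz class `X̃^Φ`. -/
def memClass {μ : Measure α} {K : ℝ} (Φ : ℝ → ℝ) (X : QNFS μ K) (f : α → ℝ) : Prop :=
  X.mem (fun x => Φ |f x|)

/-- Membership in the Orlicz space `X^Φ`. -/
def memOrlicz {μ : Measure α} {K : ℝ} (Φ : ℝ → ℝ) (X : QNFS μ K) (f : α → ℝ) : Prop :=
  ∃ c > 0, X.mem (fun x => Φ (|f x| / c))

/-- The Luxemburg quasi-norm on `X^Φ`. -/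
noncomputable def lux {μ : Measure α} {K : ℝ} (Φ : ℝ → ℝ) (X : QNFS μ K) (f : α → ℝ) : ℝ :=
  sInf {k : ℝ | 0 < k ∧ X.mem (fun x => Φ (|f x| / k)) ∧
    X.nrm (fun x => Φ (|f x| / k)) ≤ 1}


section Aux

open Pointwise

variable {μ : Measure α} {K : ℝ} {Φ : ℝ → ℝ}

/-- The defining set of the Luxemburg functional. -/
def luxSet (Φ : ℝ → ℝ) (X : QNFS μ K) (f : α → ℝ) : Set ℝ :=
  {k : ℝ | 0 < k ∧ X.mem (fun x => Φ (|f x| / k)) ∧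
    X.nrm (fun x => Φ (|f x| / k)) ≤ 1}

lemma lux_eq (X : QNFS μ K) (f : α → ℝ) : lux Φ X f = sInf (luxSet Φ X f) := rfl

lemma phi_nonneg (hΦ : IsYoung Φ) {t : ℝ} (ht : 0 ≤ t) : 0 ≤ Φ t := by
  rcases ht.eq_or_lt with h | h
  · rw [← h, hΦ.map_zero]
  · have := hΦ.strictMono (le_refl (0:ℝ)) (le_of_lt h) h
    rw [hΦ.map_zero] at this
    exact this.le

lemma phi_mono (hΦ : IsYoung Φ) {s t : ℝ} (hs : 0 ≤ s) (hst : s ≤ t) : Φ s ≤ Φ t :=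
  hΦ.strictMono.monotoneOn hs (hs.trans hst) hst

lemma phi_div (hΦ : IsYoung Φ) {t C : ℝ} (ht : 0 ≤ t) (hC : 1 ≤ C) :
    Φ (t / C) ≤ Φ t / C := by
  have hC0 : 0 < C := lt_of_lt_of_le one_pos hC
  have h1 : (0:ℝ) ≤ 1 / C := by positivity
  have h2 : (0:ℝ) ≤ 1 - 1 / C := by
    have : 1 / C ≤ 1 := by rw [div_le_one hC0]; exact hC
    linarith
  have h3 : 1 / C + (1 - 1 / C) = 1 := by ring
  have := hΦ.convex.2 (mem_Ici.mpr ht) (mem_Ici.mpr (le_refl (0:ℝ))) h1 h2 h3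
  simp only [smul_eq_mul, mul_zero, add_zero, hΦ.map_zero] at this
  calc Φ (t / C) = Φ (1 / C * t) := by rw [one_div, inv_mul_eq_div]
    _ ≤ 1 / C * Φ t := this
    _ = Φ t / C := by ring

lemma mem_zero (X : QNFS μ K) : X.mem (fun _ : α => (0:ℝ)) :=
  X.ideal_mem _ _ X.const_one_mem (Filter.Eventually.of_forall fun _ => by norm_num)

lemma nrm_zero (X : QNFS μ K) : X.nrm (fun _ : α => (0:ℝ)) = 0 := by
  have e : (fun _ : α => (0:ℝ)) = (0:ℝ) • (fun _ : α => (1:ℝ)) := by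
    funext x; simp
  rw [e, X.nrm_smul 0 _ X.const_one_mem]; simp

lemma luxSet_bddBelow (X : QNFS μ K) (f : α → ℝ) : BddBelow (luxSet Φ X f) :=
  ⟨0, fun k hk => hk.1.le⟩

lemma luxSet_nonneg (X : QNFS μ K) (f : α → ℝ) : 0 ≤ lux Φ X f :=
  Real.sInf_nonneg (fun k hk => hk.1.le)

lemma luxSet_nonempty (hΦ : IsYoung Φ) (X : QNFS μ K) {f : α → ℝ}
    (hf : memOrlicz Φ X f) : (luxSet Φ X f).Nonempty := by
  obtain ⟨c, hc, hmem⟩ := hf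
  set u : α → ℝ := fun x => Φ (|f x| / c) with hu
  have hu0 : ∀ x, 0 ≤ u x := fun x => phi_nonneg hΦ (by positivity)
  set l : ℝ := max 1 (X.nrm u) with hl
  have hl1 : 1 ≤ l := le_max_left _ _
  have hl0 : 0 < l := lt_of_lt_of_le one_pos hl1
  refine ⟨l * c, by positivity, ?_⟩
  have hptw : ∀ x, |Φ (|f x| / (l * c))| ≤ |((1/l) • u) x| := by
    intro x
    have e : |f x| / (l * c) = (|f x| / c) / l := by
      rw [div_div]; ring_nf
    have h1 : Φ (|f x| / (l * c)) ≤ u x / l := by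
      rw [e]; exact phi_div hΦ (by positivity) hl1
    have h0 : 0 ≤ Φ (|f x| / (l * c)) := phi_nonneg hΦ (by positivity)
    have h2 : ((1/l) • u) x = 1/l * u x := rfl
    have h3 : u x / l = 1/l * u x := by ring
    rw [h2, abs_of_nonneg h0, abs_of_nonneg (mul_nonneg (by positivity) (hu0 x))]
    rw [← h3]; exact h1
  have hmem' : X.mem ((1/l) • u) := X.smul_mem _ _ hmem
  have hmemT : X.mem (fun x => Φ (|f x| / (l * c))) :=
    X.ideal_mem _ _ hmem' (Filter.Eventually.of_forall hptw)
  refine ⟨hmemT, ?_⟩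
  have := X.ideal_nrm _ _ hmemT hmem' (Filter.Eventually.of_forall hptw)
  rw [X.nrm_smul _ _ hmem] at this
  have hle : |1/l| * X.nrm u ≤ 1 := by
    rw [abs_of_nonneg (by positivity)]
    have : X.nrm u ≤ l := le_max_right _ _
    rw [div_mul_eq_mul_div, one_mul, div_le_one hl0]
    exact this
  exact this.trans hle

lemma luxSet_mono (hΦ : IsYoung Φ) (X : QNFS μ K) {f g : α → ℝ}
    (hfg : ∀ᵐ x ∂μ, |f x| ≤ |g x|) : luxSet Φ X g ⊆ luxSet Φ X f := by
  rintro k ⟨hk, hmem, hnrm⟩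
  have hptw : ∀ᵐ x ∂μ, |Φ (|f x| / k)| ≤ |Φ (|g x| / k)| := by
    filter_upwards [hfg] with x hx
    have h0 : 0 ≤ Φ (|f x| / k) := phi_nonneg hΦ (by positivity)
    have h0' : 0 ≤ Φ (|g x| / k) := phi_nonneg hΦ (by positivity)
    rw [abs_of_nonneg h0, abs_of_nonneg h0']
    exact phi_mono hΦ (by positivity) (by gcongr)
  exact ⟨hk, X.ideal_mem _ _ hmem hptw, (X.ideal_nrm _ _ (X.ideal_mem _ _ hmem hptw) hmem hptw).trans hnrm⟩

lemma lux_le_of_ae_le (hΦ : IsYoung Φ) (X : QNFS μ K) {f g : α → ℝ}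
    (hg : memOrlicz Φ X g) (hfg : ∀ᵐ x ∂μ, |f x| ≤ |g x|) :
    lux Φ X f ≤ lux Φ X g :=
  csInf_le_csInf (luxSet_bddBelow X f) (luxSet_nonempty hΦ X hg) (luxSet_mono hΦ X hfg)

lemma memOrlicz_of_ae_le (hΦ : IsYoung Φ) (X : QNFS μ K) {f g : α → ℝ}
    (hg : memOrlicz Φ X g) (hfg : ∀ᵐ x ∂μ, |f x| ≤ |g x|) : memOrlicz Φ X f := by
  obtain ⟨c, hc, hmem⟩ := hg
  refine ⟨c, hc, X.ideal_mem _ _ hmem ?_⟩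
  filter_upwards [hfg] with x hx
  have h0 : 0 ≤ Φ (|f x| / c) := phi_nonneg hΦ (by positivity)
  have h0' : 0 ≤ Φ (|g x| / c) := phi_nonneg hΦ (by positivity)
  rw [abs_of_nonneg h0, abs_of_nonneg h0']
  exact phi_mono hΦ (by positivity) (by gcongr)

lemma lux_zero_of_ae (hΦ : IsYoung Φ) (X : QNFS μ K) {f : α → ℝ}
    (hf : f =ᵐ[μ] 0) : lux Φ X f = 0 := by
  have hset : luxSet Φ X f = Ioi 0 := by
    ext k
    constructor
    · exact fun hk => hk.1
    · intro hk
      have hae : ∀ᵐ x ∂μ, |Φ (|f x| / k)| ≤ |(fun _ : α => (0:ℝ)) x| := by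
        filter_upwards [hf] with x hx
        have : f x = 0 := hx
        simp [this, hΦ.map_zero]
      refine ⟨hk, X.ideal_mem _ _ (mem_zero X) hae, ?_⟩
      have hm : X.mem (fun x => Φ (|f x| / k)) := X.ideal_mem _ _ (mem_zero X) hae
      have := X.ideal_nrm _ _ hm (mem_zero X) hae
      rw [nrm_zero X] at this
      linarith
  rw [lux_eq, hset, csInf_Ioi]

lemma ae_zero_of_lux_zero (hΦ : IsYoung Φ) (X : QNFS μ K) {f : α → ℝ}
    (hf : memOrlicz Φ X f) (h0 : lux Φ X f = 0) : f =ᵐ[μ] 0 := by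
  have hne := luxSet_nonempty hΦ X hf
  -- step: for every t > 0, a.e. |f x| < t
  have key : ∀ t : ℝ, 0 < t → ∀ᵐ x ∂μ, |f x| < t := by
    intro t ht
    set A : Set α := {x | t ≤ |f x|} with hA
    set ind : α → ℝ := A.indicator (fun _ => (1:ℝ)) with hind
    have hind01 : ∀ x, 0 ≤ ind x ∧ ind x ≤ 1 := by
      intro x
      by_cases hx : x ∈ A <;> simp [hind, hx]
    have hindmem : X.mem ind := by
      refine X.ideal_mem _ _ X.const_one_mem (Filter.Eventually.of_forall fun x => ?_)
      rw [abs_of_nonneg (hind01 x).1]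
      simpa using (hind01 x).2
    have hsmall : ∀ ε : ℝ, 0 < ε → X.nrm ind ≤ ε := by
      intro ε hε
      obtain ⟨M, hM⟩ := (hΦ.tendsto_atTop.eventually_ge_atTop (1/ε)).exists_forall_of_atTop
      set M' : ℝ := max M 1 with hM'
      have hM'0 : 0 < M' := lt_of_lt_of_le one_pos (le_max_right _ _)
      have hlt : sInf (luxSet Φ X f) < t / M' := by
        rw [← lux_eq, h0]; positivity
      obtain ⟨k, hkS, hk⟩ := exists_lt_of_csInf_lt hne hlt
      obtain ⟨hkpos, hkmem, hknrm⟩ := hkS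
      have hptw : ∀ x, |((1/ε) • ind) x| ≤ |Φ (|f x| / k)| := by
        intro x
        have hΦ0 : 0 ≤ Φ (|f x| / k) := phi_nonneg hΦ (by positivity)
        have he : ((1/ε) • ind) x = 1/ε * ind x := rfl
        rw [he, abs_of_nonneg (mul_nonneg (by positivity) (hind01 x).1),
          abs_of_nonneg hΦ0]
        by_cases hx : x ∈ A
        · have hindx : ind x = 1 := by simp [hind, hx]
          rw [hindx, mul_one]
          have h1 : t / k ≤ |f x| / k := by
            have := hA ▸ hx
            gcongr
            exact this
          have h2 : M ≤ t / k := by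
            have hkM : k < t / M' := hk
            have : M' * k < t := by
              rw [lt_div_iff₀ hM'0] at hkM; linarith [hkM]
            have hM'M : M ≤ M' := le_max_left _ _
            rw [le_div_iff₀ hkpos]
            nlinarith [hM'0.le, hkpos.le]
          exact (hM _ (h2.trans h1)).trans (le_refl _) |>.trans (le_refl _)
        · have hindx : ind x = 0 := by simp [hind, hx]
          rw [hindx, mul_zero]; exact hΦ0
      have hmem' : X.mem ((1/ε) • ind) := X.smul_mem _ _ hindmem
      have := X.ideal_nrm _ _ hmem' hkmem (Filter.Eventually.of_forall hptw)
      rw [X.nrm_smul _ _ hindmem, abs_of_nonneg (by positivity : (0:ℝ) ≤ 1/ε)] at this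
      have hfin : 1/ε * X.nrm ind ≤ 1 := this.trans hknrm
      calc X.nrm ind = ε * (1/ε * X.nrm ind) := by field_simp
        _ ≤ ε * 1 := by apply mul_le_mul_of_nonneg_left hfin hε.le
        _ = ε := mul_one ε
    have hnrm0 : X.nrm ind = 0 := by
      by_contra hne0
      have hpos : 0 < X.nrm ind := lt_of_le_of_ne (X.nrm_nonneg ind) (Ne.symm hne0)
      have := hsmall (X.nrm ind / 2) (by linarith)
      linarith
    have hae : ind =ᵐ[μ] 0 := (X.nrm_eq_zero ind hindmem).mp hnrm0
    filter_upwards [hae] with x hx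
    by_contra hcon
    push_neg at hcon
    have hxA : x ∈ A := hcon
    have : ind x = 1 := by simp [hind, hxA]
    rw [show (0:α → ℝ) x = 0 from rfl] at hx
    rw [this] at hx
    exact one_ne_zero hx
  have hall : ∀ᵐ x ∂μ, ∀ n : ℕ, |f x| < 1 / (n + 1) := by
    rw [ae_all_iff]
    intro n
    exact key _ (by positivity)
  filter_upwards [hall] with x hx
  by_contra hcon
  have hpos : 0 < |f x| := by
    rcases (abs_nonneg (f x)).eq_or_lt with h | h
    · exact absurd (abs_eq_zero.mp h.symm) hcon
    · exact h
  obtain ⟨n, hn⟩ := exists_nat_one_div_lt hpos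
  exact absurd (hx n) (not_lt.mpr hn.le)

lemma luxSet_smul (X : QNFS μ K) {c : ℝ} (hc : c ≠ 0) (f : α → ℝ) :
    luxSet Φ X (c • f) = |c| • luxSet Φ X f := by
  have hc0 : 0 < |c| := abs_pos.mpr hc
  have keyfun : ∀ j : ℝ, 0 < j →
      (fun x => Φ (|(c • f) x| / (|c| * j))) = (fun x => Φ (|f x| / j)) := by
    intro j hj
    funext x
    congr 1
    have : (c • f) x = c * f x := rfl
    rw [this, abs_mul, mul_div_mul_left _ _ (ne_of_gt hc0)]
  ext k
  constructor
  · rintro ⟨hk, hmem, hnrm⟩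
    refine ⟨k / |c|, ?_, ?_⟩
    · have hj : 0 < k / |c| := by positivity
      have hkk : |c| * (k / |c|) = k := by field_simp
      refine ⟨hj, ?_, ?_⟩
      · rw [← keyfun _ hj, hkk]; exact hmem
      · rw [← keyfun _ hj, hkk]; exact hnrm
    · simp [smul_eq_mul]; field_simp
  · rintro ⟨j, ⟨hj, hmem, hnrm⟩, hjk⟩
    have hjk' : |c| * j = k := hjk
    refine ⟨by rw [← hjk']; positivity, ?_, ?_⟩
    · rw [← hjk', keyfun _ hj]; exact hmem
    · rw [← hjk', keyfun _ hj]; exact hnrm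

lemma lux_smul (X : QNFS μ K) {c : ℝ} (hc : c ≠ 0) (f : α → ℝ) :
    lux Φ X (c • f) = |c| * lux Φ X f := by
  rw [lux_eq, lux_eq, luxSet_smul X hc f, Real.sInf_smul_of_nonneg (abs_nonneg c)]
  rfl

lemma lux_add_le_gen (hΦ : IsYoung Φ) (X : QNFS μ K) {f g : α → ℝ}
    (hf : memOrlicz Φ X f) (hg : memOrlicz Φ X g) {C : ℝ} (hC : 1 ≤ C)
    (Hsub : ∀ u v, X.mem u → X.mem v → X.nrm (u + v) ≤ C * (X.nrm u + X.nrm v)) :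
    lux Φ X (f + g) ≤ C * (lux Φ X f + lux Φ X g) := by
  have hC0 : 0 < C := lt_of_lt_of_le one_pos hC
  have step : ∀ a ∈ luxSet Φ X f, ∀ b ∈ luxSet Φ X g,
      C * (a + b) ∈ luxSet Φ X (f + g) := by
    rintro a ⟨ha, hamem, hanrm⟩ b ⟨hb, hbmem, hbnrm⟩
    have hab : 0 < a + b := by linarith
    set u : α → ℝ := fun x => Φ (|f x| / a) with hu
    set v : α → ℝ := fun x => Φ (|g x| / b) with hv
    set la : ℝ := a / (a + b) with hla
    set lb : ℝ := b / (a + b) with hlb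
    have hla0 : 0 ≤ la := by positivity
    have hlb0 : 0 ≤ lb := by positivity
    have hlab : la + lb = 1 := by rw [hla, hlb, ← add_div, div_self (ne_of_gt hab)]
    set w : α → ℝ := la • u + lb • v with hw
    have hu0 : ∀ x, 0 ≤ u x := fun x => phi_nonneg hΦ (by positivity)
    have hv0 : ∀ x, 0 ≤ v x := fun x => phi_nonneg hΦ (by positivity)
    have hw0 : ∀ x, 0 ≤ w x := by
      intro x
      have : w x = la * u x + lb * v x := rfl
      rw [this]
      have := hu0 x; have := hv0 x
      positivity
    have hptw : ∀ x, |Φ (|(f + g) x| / (C * (a + b)))| ≤ |((1/C) • w) x| := by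
      intro x
      have hfg : (f + g) x = f x + g x := rfl
      set s : ℝ := |f x + g x| / (a + b) with hs
      have hs0 : 0 ≤ s := by positivity
      have e1 : |(f + g) x| / (C * (a + b)) = s / C := by
        rw [hfg, hs, div_div, mul_comm]
      have h1 : Φ (s / C) ≤ Φ s / C := phi_div hΦ hs0 hC
      have h2 : s ≤ la * (|f x| / a) + lb * (|g x| / b) := by
        have e2 : la * (|f x| / a) + lb * (|g x| / b) = (|f x| + |g x|) / (a + b) := by
          rw [hla, hlb]; field_simp
        rw [e2, hs]
        gcongr
        exact abs_add_le _ _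
      have h3 : Φ s ≤ Φ (la * (|f x| / a) + lb * (|g x| / b)) :=
        phi_mono hΦ hs0 h2
      have h4 : Φ (la * (|f x| / a) + lb * (|g x| / b)) ≤ la * u x + lb * v x := by
        have := hΦ.convex.2 (mem_Ici.mpr (by positivity : (0:ℝ) ≤ |f x| / a))
          (mem_Ici.mpr (by positivity : (0:ℝ) ≤ |g x| / b)) hla0 hlb0 hlab
        simpa [smul_eq_mul] using this
      have h5 : Φ (|(f + g) x| / (C * (a + b))) ≤ (1/C) * w x := by
        rw [e1]
        have hwx : w x = la * u x + lb * v x := rfl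
        calc Φ (s / C) ≤ Φ s / C := h1
          _ ≤ (la * u x + lb * v x) / C := by
              apply div_le_div_of_nonneg_right _ hC0.le
              exact h3.trans h4
          _ = (1/C) * w x := by rw [hwx]; ring
      have hL0 : 0 ≤ Φ (|(f + g) x| / (C * (a + b))) := phi_nonneg hΦ (by positivity)
      have hR : ((1/C) • w) x = (1/C) * w x := rfl
      rw [hR, abs_of_nonneg hL0, abs_of_nonneg (mul_nonneg (by positivity) (hw0 x))]
      exact h5
    have hlamem : X.mem (la • u) := X.smul_mem _ _ hamem
    have hlbmem : X.mem (lb • v) := X.smul_mem _ _ hbmem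
    have hwmem : X.mem w := X.add_mem _ _ hlamem hlbmem
    have hhmem : X.mem ((1/C) • w) := X.smul_mem _ _ hwmem
    have htmem : X.mem (fun x => Φ (|(f + g) x| / (C * (a + b)))) :=
      X.ideal_mem _ _ hhmem (Filter.Eventually.of_forall hptw)
    refine ⟨by positivity, htmem, ?_⟩
    have hle := X.ideal_nrm _ _ htmem hhmem (Filter.Eventually.of_forall hptw)
    have hnw : X.nrm w ≤ C := by
      have h6 := Hsub _ _ hlamem hlbmem
      rw [X.nrm_smul _ _ hamem, X.nrm_smul _ _ hbmem,
        abs_of_nonneg hla0, abs_of_nonneg hlb0] at h6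
      have : la * X.nrm u + lb * X.nrm v ≤ la + lb := by
        have h7 : la * X.nrm u ≤ la * 1 := mul_le_mul_of_nonneg_left hanrm hla0
        have h8 : lb * X.nrm v ≤ lb * 1 := mul_le_mul_of_nonneg_left hbnrm hlb0
        linarith
      rw [hlab] at this
      calc X.nrm w ≤ C * (la * X.nrm u + lb * X.nrm v) := h6
        _ ≤ C * 1 := mul_le_mul_of_nonneg_left this hC0.le
        _ = C := mul_one C
    have : X.nrm ((1/C) • w) ≤ 1 := by
      rw [X.nrm_smul _ _ hwmem, abs_of_nonneg (by positivity : (0:ℝ) ≤ 1/C)]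
      calc 1/C * X.nrm w ≤ 1/C * C := by
            apply mul_le_mul_of_nonneg_left hnw (by positivity)
        _ = 1 := by field_simp
    exact hle.trans this
  refine le_of_forall_pos_le_add fun ε hε => ?_
  have hεC : 0 < ε / (2 * C) := by positivity
  obtain ⟨a, haS, ha⟩ := exists_lt_of_csInf_lt (luxSet_nonempty hΦ X hf)
    (lt_add_of_pos_right (sInf (luxSet Φ X f)) hεC)
  obtain ⟨b, hbS, hb⟩ := exists_lt_of_csInf_lt (luxSet_nonempty hΦ X hg)
    (lt_add_of_pos_right (sInf (luxSet Φ X g)) hεC)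
  have h1 : lux Φ X (f + g) ≤ C * (a + b) :=
    csInf_le (luxSet_bddBelow X (f + g)) (step a haS b hbS)
  rw [← lux_eq X f] at ha
  rw [← lux_eq X g] at hb
  have h2 : a + b < lux Φ X f + lux Φ X g + ε / C := by
    have : ε / (2 * C) + ε / (2 * C) = ε / C := by ring
    linarith
  have h3 : C * (a + b) ≤ C * (lux Φ X f + lux Φ X g + ε / C) :=
    mul_le_mul_of_nonneg_left h2.le hC0.le
  have h4 : C * (lux Φ X f + lux Φ X g + ε / C) = C * (lux Φ X f + lux Φ X g) + ε := by
    field_simp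
  linarith

end Aux

/-- The Luxemburg functional is a quasi-norm on `X^Φ` with the same
quasi-triangle constant `K`, and `X^Φ` is a quasi-normed function space over
`μ`; if the quasi-norm of `X` is a norm, the Luxemburg functional is a norm. -/
theorem stmt_7 {μ : Measure α} [IsFiniteMeasure μ] {K : ℝ}
    (Φ : ℝ → ℝ) (hΦ : IsYoung Φ) (X : QNFS μ K) :
    (∀ f : α → ℝ, memOrlicz Φ X f → 0 ≤ lux Φ X f) ∧
    (∀ f : α → ℝ, memOrlicz Φ X f → (lux Φ X f = 0 ↔ f =ᵐ[μ] 0)) ∧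
    (∀ (c : ℝ) (f : α → ℝ), memOrlicz Φ X f →
      lux Φ X (c • f) = |c| * lux Φ X f) ∧
    (∀ f g : α → ℝ, memOrlicz Φ X f → memOrlicz Φ X g →
      lux Φ X (f + g) ≤ K * (lux Φ X f + lux Φ X g)) ∧
    (∀ f g : α → ℝ, memOrlicz Φ X g → (∀ᵐ x ∂μ, |f x| ≤ |g x|) →
      memOrlicz Φ X f ∧ lux Φ X f ≤ lux Φ X g) ∧
    (memOrlicz Φ X (fun _ => (1 : ℝ))) ∧
    ((∀ f g : α → ℝ, X.mem f → X.mem g → X.nrm (f + g) ≤ X.nrm f + X.nrm g) →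
      ∀ f g : α → ℝ, memOrlicz Φ X f → memOrlicz Φ X g →
        lux Φ X (f + g) ≤ lux Φ X f + lux Φ X g) := by
  refine ⟨fun f _ => luxSet_nonneg X f,
    fun f hf => ⟨ae_zero_of_lux_zero hΦ X hf, lux_zero_of_ae hΦ X⟩,
    ?_, ?_, ?_, ?_, ?_⟩
  · intro c f hf
    by_cases hc : c = 0
    · subst hc
      have h1 : (0:ℝ) • f =ᵐ[μ] 0 := by rw [zero_smul]
      rw [lux_zero_of_ae hΦ X h1, abs_zero, zero_mul]
    · exact lux_smul X hc f
  · exact fun f g hf hg => lux_add_le_gen hΦ X hf hg X.one_le_K X.nrm_add_le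
  · exact fun f g hg hfg =>
      ⟨memOrlicz_of_ae_le hΦ X hg hfg, lux_le_of_ae_le hΦ X hg hfg⟩
  · refine ⟨1, one_pos, ?_⟩
    have e : (fun x : α => Φ (|(1:ℝ)| / 1)) = Φ 1 • (fun _ : α => (1:ℝ)) := by
      funext x; simp [smul_eq_mul]
    rw [e]
    exact X.smul_mem _ _ X.const_one_mem
  · intro H f g hf hg
    have := lux_add_le_gen hΦ X hf hg (le_refl (1:ℝ))
      (fun u v hu hv => by rw [one_mul]; exact H u v hu hv)
    simpa using this
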